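/- Let Λ be a locally convex k-graph. Then Λ^{≤m+n} = Λ^{≤m}Λ^{≤n} for all m, n ∈ ℕ^k; that is, every element of Λ^{≤m+n} factors as a product of an element of Λ^{≤m} followed by an element of Λ^{≤n}, and conversely every such composable product lies in Λ^{≤m+n}. -/

import Mathlib

/-- A small category, modelled algebraically: a set of morphisms with source and
range maps and a (total, but only meaningful on composable pairs) composition. -/
structure CatStruct (C : Type*) where
  src : C → C
  rng : C → C
  comp : C → C → C
  src_src : ∀ a, src (src a) = src a
  rng_src : ∀ a, rng (src a) = src a
  src_rng : ∀ a, src (rng a) = rng a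
  rng_rng : ∀ a, rng (rng a) = rng a
  comp_src : ∀ a, comp a (src a) = a
  rng_comp_self : ∀ a, comp (rng a) a = a
  src_comp : ∀ a b, src a = rng b → src (comp a b) = src b
  rng_comp : ∀ a b, src a = rng b → rng (comp a b) = rng a
  assoc : ∀ a b c, src a = rng b → src b = rng c →
    comp (comp a b) c = comp a (comp b c)

namespace CatStruct

variable {C : Type*}

/-- The principal right ideal `aC`. -/
def ideal (𝒞 : CatStruct C) (a : C) : Set C :=
  {x | ∃ c, 𝒞.src a = 𝒞.rng c ∧ x = 𝒞.comp a c}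

/-- The principal right ideal of `a` relative to a subcategory `D`. -/
def idealIn (𝒞 : CatStruct C) (D : Set C) (a : C) : Set C :=
  {x | ∃ c ∈ D, 𝒞.src a = 𝒞.rng c ∧ x = 𝒞.comp a c}

def LeftCancellative (𝒞 : CatStruct C) : Prop :=
  ∀ a b c, 𝒞.src a = 𝒞.rng b → 𝒞.src a = 𝒞.rng c →
    𝒞.comp a b = 𝒞.comp a c → b = c

def FinitelyAligned (𝒞 : CatStruct C) : Prop :=
  ∀ a b : C, ∃ F : Finset C, 𝒞.ideal a ∩ 𝒞.ideal b = ⋃ c ∈ F, 𝒞.ideal c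

def IsInvertible (𝒞 : CatStruct C) (c : C) : Prop :=
  ∃ c', 𝒞.src c' = 𝒞.rng c ∧ 𝒞.rng c' = 𝒞.src c ∧
    𝒞.comp c c' = 𝒞.rng c ∧ 𝒞.comp c' c = 𝒞.src c

/-- `a ~ b` : there is an invertible `c` with `a = bc`. -/
def equivR (𝒞 : CatStruct C) (a b : C) : Prop :=
  ∃ c, 𝒞.IsInvertible c ∧ 𝒞.src b = 𝒞.rng c ∧ a = 𝒞.comp b c

def Independent (𝒞 : CatStruct C) (A : Set C) : Prop :=
  ∀ a ∈ A, ∀ a' ∈ A, a ≠ a' → a ∉ 𝒞.ideal a'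

end CatStruct

/-- A `k`-graph: a small category with an `ℕ^k`-valued degree functor satisfying
the unique factorisation property. -/
structure KGraph (k : ℕ) (C : Type*) extends CatStruct C where
  d : C → Fin k → ℕ
  d_comp : ∀ a b, src a = rng b → d (comp a b) = d a + d b
  factor : ∀ (lam : C) (m n : Fin k → ℕ), d lam = m + n →
    ∃! p : C × C, src p.1 = rng p.2 ∧ lam = comp p.1 p.2 ∧ d p.1 = m ∧ d p.2 = n

namespace KGraph

variable {k : ℕ} {C : Type*}

def LocallyConvex (Λ : KGraph k C) : Prop :=
  ∀ i j : Fin k, i ≠ j → ∀ e : C, Λ.d e = Pi.single i 1 →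
    (∃ f, Λ.rng f = Λ.rng e ∧ Λ.d f = Pi.single j 1) →
    ∃ f, Λ.rng f = Λ.src e ∧ Λ.d f = Pi.single j 1

/-- `Λ^{≤ n}`. -/
def LeSet (Λ : KGraph k C) (n : Fin k → ℕ) : Set C :=
  {lam | Λ.d lam ≤ n ∧ ∀ i : Fin k, Λ.d lam i < n i →
    ¬∃ e, Λ.rng e = Λ.src lam ∧ Λ.d e = Pi.single i 1}

end KGraph

namespace KGraph

variable {k : ℕ} {C : Type*} (Λ : KGraph k C)

lemma d_rng_eq_zero (a : C) : Λ.d (Λ.rng a) = 0 := by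
  have h1 : Λ.comp (Λ.rng a) (Λ.rng a) = Λ.rng a := by
    have := Λ.rng_comp_self (Λ.rng a)
    rwa [Λ.rng_rng] at this
  have h2 := Λ.d_comp (Λ.rng a) (Λ.rng a) (by rw [Λ.src_rng, Λ.rng_rng])
  rw [h1] at h2
  funext i
  have := congrFun h2 i
  simp only [Pi.add_apply, Pi.zero_apply] at this ⊢
  omega

lemma d_src_eq_zero (a : C) : Λ.d (Λ.src a) = 0 := by
  have h1 : Λ.comp (Λ.src a) (Λ.src a) = Λ.src a := by
    have := Λ.comp_src (Λ.src a)
    rwa [Λ.src_src] at this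
  have h2 := Λ.d_comp (Λ.src a) (Λ.src a) (by rw [Λ.src_src, Λ.rng_src])
  rw [h1] at h2
  funext i
  have := congrFun h2 i
  simp only [Pi.add_apply, Pi.zero_apply] at this ⊢
  omega

lemma eq_of_d_zero {a : C} (h : Λ.d a = 0) : Λ.rng a = a ∧ a = Λ.src a := by
  obtain ⟨p, _, hu⟩ := Λ.factor a 0 0 (by simpa using h)
  have h1 := hu (Λ.rng a, a)
    ⟨Λ.src_rng a,
     (Λ.rng_comp_self a).symm, Λ.d_rng_eq_zero a, h⟩
  have h2 := hu (a, Λ.src a)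
    ⟨(Λ.rng_src a).symm, (Λ.comp_src a).symm, h, Λ.d_src_eq_zero a⟩
  have h3 : ((Λ.rng a, a) : C × C) = (a, Λ.src a) := h1.trans h2.symm
  exact ⟨congrArg Prod.fst h3, congrArg Prod.snd h3⟩

lemma segment (lam : C) (p : Fin k → ℕ) (hp : p ≤ Λ.d lam) :
    ∃ μ ν : C, Λ.src μ = Λ.rng ν ∧ lam = Λ.comp μ ν ∧ Λ.d μ = p ∧
      Λ.d ν = Λ.d lam - p := by
  obtain ⟨⟨μ, ν⟩, ⟨h1, h2, h3, h4⟩, _⟩ :=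
    Λ.factor lam p (Λ.d lam - p)
      (by
        funext i
        have h : p i ≤ Λ.d lam i := hp i
        simp only [Pi.add_apply, Pi.sub_apply]
        omega)
  exact ⟨μ, ν, h1, h2, h3, h4⟩

lemma single_le {lam : C} {i : Fin k} (h : 0 < Λ.d lam i) :
    (Pi.single i 1 : Fin k → ℕ) ≤ Λ.d lam := by
  intro j
  rcases eq_or_ne j i with rfl | hj
  · simpa using (Nat.succ_le_of_lt h : 1 ≤ Λ.d lam j)
  · simp [Pi.single_apply, hj]

lemma exists_edge_rng {lam : C} {i : Fin k} (h : 0 < Λ.d lam i) :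
    ∃ e, Λ.rng e = Λ.rng lam ∧ Λ.d e = Pi.single i 1 := by
  obtain ⟨μ, ν, h1, h2, h3, _⟩ := Λ.segment lam (Pi.single i 1) (Λ.single_le h)
  refine ⟨μ, ?_, h3⟩
  rw [h2, Λ.rng_comp _ _ h1]

/-- Pull back an edge at the source of `ν` to an edge at its range. -/
lemma pullback {ν : C} {i : Fin k}
    (he : ∃ e, Λ.rng e = Λ.src ν ∧ Λ.d e = Pi.single i 1) :
    ∃ e, Λ.rng e = Λ.rng ν ∧ Λ.d e = Pi.single i 1 := by
  obtain ⟨e, he1, he2⟩ := he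
  have hcomp : Λ.src ν = Λ.rng e := he1.symm
  have hd : Λ.d (Λ.comp ν e) = Λ.d ν + Λ.d e := Λ.d_comp ν e hcomp
  have hpos : 0 < Λ.d (Λ.comp ν e) i := by
    rw [hd]; simp [he2]
  obtain ⟨f, hf1, hf2⟩ := Λ.exists_edge_rng hpos
  exact ⟨f, by rw [hf1, Λ.rng_comp _ _ hcomp], hf2⟩

/-- Push an edge of degree `eᵢ` forward along a path with `d ν i = 0`,
using local convexity. -/
lemma extend_aux (hlc : Λ.LocallyConvex) :
    ∀ N : ℕ, ∀ ν : C, ∀ i : Fin k, (∑ j, Λ.d ν j) = N → Λ.d ν i = 0 →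
    (∃ e, Λ.rng e = Λ.rng ν ∧ Λ.d e = Pi.single i 1) →
    ∃ e, Λ.rng e = Λ.src ν ∧ Λ.d e = Pi.single i 1 := by
  intro N
  induction N using Nat.strong_induction_on with
  | _ N ih =>
    intro ν i hsum h0 he
    rcases Nat.eq_zero_or_pos N with rfl | hN
    · -- all degrees zero : ν is a vertex
      have hz : Λ.d ν = 0 := by
        funext j
        have := Finset.sum_eq_zero_iff.mp hsum j (Finset.mem_univ j)
        simpa using this
      obtain ⟨hr, hs⟩ := Λ.eq_of_d_zero hz
      rwa [hr.trans hs] at he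
    · -- pick j with d ν j > 0
      have : ∃ j, 0 < Λ.d ν j := by
        by_contra hcon
        push_neg at hcon
        have : (∑ j, Λ.d ν j) = 0 := Finset.sum_eq_zero fun j _ => by
          have := hcon j; omega
        omega
      obtain ⟨j, hj⟩ := this
      have hji : j ≠ i := fun h => by rw [h, h0] at hj; omega
      obtain ⟨e, ν', h1, h2, h3, h4⟩ := Λ.segment ν (Pi.single j 1) (Λ.single_le hj)
      have hrng : Λ.rng e = Λ.rng ν := by rw [h2, Λ.rng_comp _ _ h1]
      have hsrc : Λ.src ν' = Λ.src ν := by rw [h2, Λ.src_comp _ _ h1]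
      -- apply local convexity to the edge e
      obtain ⟨f, hf1, hf2⟩ := hlc j i hji e h3 (by rwa [hrng])
      rw [h1] at hf1
      -- induct on ν'
      have hd' : Λ.d ν' i = 0 := by
        rw [h4]; simp only [Pi.sub_apply]
        have : (Pi.single j 1 : Fin k → ℕ) i = 0 := by simp [Pi.single_apply, hji]
        omega
      have hsum' : (∑ l, Λ.d ν' l) < N := by
        have : ∀ l, Λ.d ν' l = Λ.d ν l - (Pi.single j 1 : Fin k → ℕ) l := fun l => by
          rw [h4]; rfl
        calc (∑ l, Λ.d ν' l) = ∑ l, (Λ.d ν l - (Pi.single j 1 : Fin k → ℕ) l) :=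
              Finset.sum_congr rfl fun l _ => this l
          _ < ∑ l, Λ.d ν l := by
              apply Finset.sum_lt_sum (fun l _ => Nat.sub_le _ _)
              exact ⟨j, Finset.mem_univ j, by simp; omega⟩
          _ = N := hsum
      obtain ⟨g, hg1, hg2⟩ := ih _ hsum' ν' i rfl hd' ⟨f, hf1, hf2⟩
      exact ⟨g, by rw [hg1, hsrc], hg2⟩

lemma extend (hlc : Λ.LocallyConvex) {ν : C} {i : Fin k} (h0 : Λ.d ν i = 0)
    (he : ∃ e, Λ.rng e = Λ.rng ν ∧ Λ.d e = Pi.single i 1) :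
    ∃ e, Λ.rng e = Λ.src ν ∧ Λ.d e = Pi.single i 1 :=
  Λ.extend_aux hlc _ ν i rfl h0 he

end KGraph


theorem le_factorisation {k : ℕ} {C : Type*} [Countable C] (Λ : KGraph k C)
    (hlc : Λ.LocallyConvex) :
    ∀ m n : Fin k → ℕ,
      Λ.LeSet (m + n) =
        {x : C | ∃ μ ∈ Λ.LeSet m, ∃ ν ∈ Λ.LeSet n,
          Λ.src μ = Λ.rng ν ∧ x = Λ.comp μ ν} := by
  intro m n
  ext x
  constructor
  · rintro ⟨hle, hmax⟩
    obtain ⟨μ, ν, h1, h2, h3, h4⟩ := Λ.segment x (fun i => min (Λ.d x i) (m i))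
      (fun i => min_le_left _ _)
    have hc : ∀ i, Λ.d μ i = min (Λ.d x i) (m i) := fun i => congrFun h3 i
    have hc4 : ∀ i, Λ.d ν i = Λ.d x i - min (Λ.d x i) (m i) := fun i => congrFun h4 i
    have hle' : ∀ i, Λ.d x i ≤ m i + n i := fun i => hle i
    have hsν : Λ.src ν = Λ.src x := by rw [h2, Λ.src_comp _ _ h1]
    have hμ : μ ∈ Λ.LeSet m := by
      constructor
      · intro i
        show Λ.d μ i ≤ m i
        rw [hc i]; exact min_le_right _ _
      · intro i hi he
        have h1i := hc i
        have h2i := hc4 i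
        rcases le_total (Λ.d x i) (m i) with hcase | hcase
        · rw [min_eq_left hcase] at h1i h2i
          have hνi : Λ.d ν i = 0 := by omega
          have hxi : Λ.d x i < m i := by omega
          rw [h1] at he
          obtain ⟨g, hg1, hg2⟩ := Λ.extend hlc hνi he
          exact hmax i (show Λ.d x i < m i + n i by omega) ⟨g, by rw [hg1, hsν], hg2⟩
        · rw [min_eq_right hcase] at h1i
          omega
    have hν : ν ∈ Λ.LeSet n := by
      constructor
      · intro i
        show Λ.d ν i ≤ n i
        have := hle' i
        have := hc4 i
        have := min_le_left (Λ.d x i) (m i)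
        have := min_le_right (Λ.d x i) (m i)
        omega
      · intro i hi he
        refine hmax i ?_ (by rwa [hsν] at he)
        show Λ.d x i < m i + n i
        have := hc i
        have := hc4 i
        have := min_le_left (Λ.d x i) (m i)
        have := min_le_right (Λ.d x i) (m i)
        omega
    exact ⟨μ, hμ, ν, hν, h1, h2⟩
  · rintro ⟨μ, hμ, ν, hν, h1, rfl⟩
    have hdsum : Λ.d (Λ.comp μ ν) = Λ.d μ + Λ.d ν := Λ.d_comp μ ν h1
    have hsν : Λ.src (Λ.comp μ ν) = Λ.src ν := Λ.src_comp _ _ h1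
    have hdall : ∀ i, Λ.d (Λ.comp μ ν) i = Λ.d μ i + Λ.d ν i := fun i => congrFun hdsum i
    constructor
    · intro i
      show Λ.d (Λ.comp μ ν) i ≤ m i + n i
      have := hdall i
      have hm : Λ.d μ i ≤ m i := hμ.1 i
      have hn : Λ.d ν i ≤ n i := hν.1 i
      omega
    · intro i hi he
      have hi' : Λ.d (Λ.comp μ ν) i < m i + n i := hi
      rw [hsν] at he
      rcases Nat.lt_or_ge (Λ.d ν i) (n i) with hlt | hge
      · exact hν.2 i hlt he
      · have heq : Λ.d ν i = n i := le_antisymm (hν.1 i) hge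
        have hd := hdall i
        have hμi : Λ.d μ i < m i := by omega
        obtain ⟨g, hg1, hg2⟩ := Λ.pullback he
        exact hμ.2 i hμi ⟨g, by rw [hg1, h1], hg2⟩
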